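/- For a odd with a > 3 and N = 4a² + 1, the number (√N + 1)/4 does not satisfy any equation of the form (√N+1)/4 = (p√N + q)/(r√N + s) with integers p, q, r, s satisfying ps − qr = ±1; equivalently, (√N+1)/4 is not GL₂(ℤ)-equivalent to √N. -/
import Mathlib

private lemma lin_indep {t : ℝ} (ht : Irrational t) {C D : ℤ}
    (h : (C : ℝ) + (D : ℝ) * t = 0) : C = 0 ∧ D = 0 := by
  by_cases hD : D = 0
  · subst hD
    simp at h
    exact ⟨by exact_mod_cast h, rfl⟩
  · exfalso
    apply ht
    refine ⟨-(C : ℚ) / (D : ℚ), ?_⟩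
    have hD' : (D : ℝ) ≠ 0 := by exact_mod_cast hD
    push_cast
    field_simp
    linarith

private lemma descent (a : ℤ) (ha5 : 5 ≤ a) :
    ∀ n : ℕ, ∀ x y ε : ℤ, y.natAbs = n → Odd x → Odd y → (ε = 1 ∨ ε = -1) →
      x ^ 2 - (4 * a ^ 2 + 1) * y ^ 2 ≠ 4 * ε := by
  intro n
  induction n using Nat.strong_induction_on with
  | _ n IH =>
  intro x y ε hn hx hy hε heq
  set X := |x| with hXdef
  set Y := |y| with hYdef
  have hXodd : Odd X := odd_abs.mpr hx
  have hYodd : Odd Y := odd_abs.mpr hy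
  have hXnn : 0 ≤ X := abs_nonneg x
  have hYnn : 0 ≤ Y := abs_nonneg y
  have heq' : X ^ 2 - (4 * a ^ 2 + 1) * Y ^ 2 = 4 * ε := by
    rw [hXdef, hYdef, sq_abs, sq_abs]; exact heq
  have hy0 : y ≠ 0 := by rintro rfl; exact (Int.not_odd_iff_even.mpr Even.zero) hy
  have hY1 : 1 ≤ Y := Int.one_le_abs hy0
  have hX1 : 1 ≤ X := by
    rcases hXodd with ⟨k, hk⟩; omega
  rcases (by rcases hYodd with ⟨k, hk⟩; omega : Y = 1 ∨ 3 ≤ Y) with hY | hY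
  · -- base case
    rw [hY] at heq'
    have hprod : (X - 2 * a) * (X + 2 * a) = 1 + 4 * ε := by linear_combination heq'
    have hd0 : X - 2 * a ≠ 0 := by rcases hXodd with ⟨k, hk⟩; omega
    have h11 : 11 ≤ X + 2 * a := by omega
    have hεb : -1 ≤ ε ∧ ε ≤ 1 := by omega
    rcases lt_or_gt_of_ne hd0 with hd | hd
    · have h1 : X - 2 * a ≤ -1 := by omega
      have h2 := mul_le_mul_of_nonneg_right h1 (by omega : (0:ℤ) ≤ X + 2 * a)
      linarith
    · have h1 : (1 : ℤ) ≤ X - 2 * a := by omega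
      have h2 := mul_le_mul_of_nonneg_right h1 (by omega : (0:ℤ) ≤ X + 2 * a)
      linarith
  · -- descent step
    have hεb : -1 ≤ ε ∧ ε ≤ 1 := by omega
    have hYsq : 9 ≤ Y * Y := by
      calc (9:ℤ) = 3 * 3 := by norm_num
      _ ≤ Y * Y := mul_le_mul hY hY (by norm_num) (by omega)
    have hXgt : 2 * a * Y < X := by
      by_contra hcon
      push_neg at hcon
      have h2 := mul_le_mul hcon hcon hXnn (by nlinarith : (0:ℤ) ≤ 2 * a * Y)
      nlinarith
    set Y2 := X - 2 * a * Y with hY2def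
    set X2 := 2 * a * X - (4 * a ^ 2 + 1) * Y with hX2def
    have hY2odd : Odd Y2 := Odd.sub_even hXodd ⟨a * Y, by ring⟩
    have hNodd : Odd (4 * a ^ 2 + 1) := ⟨2 * a ^ 2, by ring⟩
    have hX2odd : Odd X2 := Even.sub_odd ⟨a * X, by ring⟩ (hNodd.mul hYodd)
    have hnew : X2 ^ 2 - (4 * a ^ 2 + 1) * Y2 ^ 2 = 4 * (-ε) := by
      rw [hX2def, hY2def]; linear_combination (-1 : ℤ) * heq'
    have hY2pos : 0 < Y2 := by omega
    have hY2lt : Y2 < Y := by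
      by_contra hcon
      push_neg at hcon
      have h3 : (2 * a + 1) * Y ≤ X := by
        have : Y2 = X - 2 * a * Y := hY2def
        linarith
      have h4 := mul_le_mul h3 h3 (by nlinarith : (0:ℤ) ≤ (2 * a + 1) * Y)
        (le_trans (by nlinarith) h3)
      nlinarith
    have hYn : Y = (n : ℤ) := by rw [hYdef, Int.abs_eq_natAbs, hn]
    have hlt : Y2.natAbs < n := by omega
    exact IH Y2.natAbs hlt X2 Y2 (-ε) rfl hX2odd hY2odd (by rcases hε with h | h <;> simp [h]) hnew

/-- For `a` odd with `a > 3` and `N = 4a² + 1`, the number `(√N + 1)/4` is not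
`GL₂(ℤ)`-equivalent to `√N`: there are no integers `p, q, r, s` with `ps − qr = ±1` and
`(√N + 1)/4 = (p√N + q)/(r√N + s)`. -/
theorem not_equivalent_sqrt (a N : ℤ) (ha : Odd a) (ha3 : 3 < a) (hN : N = 4 * a ^ 2 + 1) :
    ¬ ∃ p q r s : ℤ, (p * s - q * r = 1 ∨ p * s - q * r = -1) ∧
      (Real.sqrt N + 1) / 4 = (p * Real.sqrt N + q) / (r * Real.sqrt N + s) := by
  rintro ⟨p, q, r, s, hdet, heq⟩
  have ha5 : 5 ≤ a := by obtain ⟨k, hk⟩ := ha; omega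
  have hNpos : (0 : ℤ) < N := by nlinarith
  set t := Real.sqrt N with htdef
  have ht0 : 0 ≤ t := Real.sqrt_nonneg _
  have ht2 : t ^ 2 = (N : ℝ) := Real.sq_sqrt (by exact_mod_cast hNpos.le)
  have hirr : Irrational t := by
    refine irrational_nrt_of_notint_nrt 2 N (by exact_mod_cast ht2) ?_ (by norm_num)
    rintro ⟨y, hy⟩
    have hy2 : y ^ 2 = N := by
      have : (y : ℝ) ^ 2 = (N : ℝ) := by rw [← hy]; exact ht2
      exact_mod_cast this
    have hy0 : (0 : ℤ) ≤ y := by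
      have : (0 : ℝ) ≤ (y : ℝ) := hy ▸ ht0
      exact_mod_cast this
    rcases le_or_gt y (2 * a) with h | h
    · nlinarith
    · nlinarith
  have hden : (r : ℝ) * t + s ≠ 0 := by
    intro h0
    rw [h0, div_zero] at heq
    rw [div_eq_zero_iff] at heq
    rcases heq with h | h
    · linarith
    · norm_num at h
  rw [div_eq_div_iff (by norm_num) hden] at heq
  have key : ((r * N + s - 4 * q : ℤ) : ℝ) + ((r + s - 4 * p : ℤ) : ℝ) * t = 0 := by
    push_cast
    linear_combination heq - (r : ℝ) * ht2
  obtain ⟨hC, hD⟩ := lin_indep hirr key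
  have hsr : s ^ 2 - N * r ^ 2 = 4 * (p * s - q * r) := by linear_combination s * hD - r * hC
  rcases Int.even_or_odd r with hr | hr
  · obtain ⟨r₀, hr₀⟩ := hr
    have hs : s = 4 * p - 2 * r₀ := by omega
    have hq4 : 4 * q = 8 * a ^ 2 * r₀ + 4 * p := by
      linear_combination (-1 : ℤ) * hC + hs + N * hr₀ + 2 * r₀ * hN
    have hq : q = 2 * a ^ 2 * r₀ + p := by linarith
    have hps : p * s - q * r = 4 * (p ^ 2 - p * r₀ - a ^ 2 * r₀ ^ 2) := by
      rw [hs, hq, hr₀]; ring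
    have h4 : (4 : ℤ) ∣ p * s - q * r := ⟨_, hps⟩
    rcases hdet with h | h <;> rw [h] at h4 <;> norm_num at h4
  · have hsodd : Odd s := by
      have hseq : s = 4 * p - r := by omega
      rw [hseq]; exact Even.sub_odd ⟨2 * p, by ring⟩ hr
    have hfin : s ^ 2 - (4 * a ^ 2 + 1) * r ^ 2 = 4 * (p * s - q * r) := by
      rw [← hN]; exact hsr
    exact descent a ha5 r.natAbs s r (p * s - q * r) rfl hsodd hr hdet hfin
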